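/- arXiv:0705.3413 — 4 statements merged into one kernel-verified Lean document; each statement's English description precedes it below -/
import Mathlib

section
/- The number of 2×n Cauchon diagrams having no column consisting entirely of black squares equals 2^{n+1} − 1. -/
/-- Number of inversions of a list of naturals. -/
def invList : List ℕ → ℕ
  | [] => 0
  | x :: xs => xs.countP (fun y => decide (y < x)) + invList xs

/-- Flatten a list of edges (i,j) into the list i1,j1,i2,j2,.... -/
def flattenEdges (π : List (ℕ × ℕ)) : List ℕ := π.flatMap fun p => [p.1, p.2]

/-- The sign of a perfect matching presented as a list of edges. -/
def sgnList (π : List (ℕ × ℕ)) : ℤ := (-1) ^ invList (flattenEdges π)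

/-- `π` is a perfect matching of the label set `L` with allowed edges `R`. -/
def IsPM (L : Finset ℕ) (R : ℕ → ℕ → Prop) (π : List (ℕ × ℕ)) : Prop :=
  (∀ p ∈ π, p.1 < p.2 ∧ R p.1 p.2) ∧ (flattenEdges π).Nodup ∧
    ∀ x, x ∈ L ↔ x ∈ flattenEdges π

/-- A perfect matching in canonical form: edges sorted by smaller endpoint. -/
def IsPMsorted (L : Finset ℕ) (R : ℕ → ℕ → Prop) (π : List (ℕ × ℕ)) : Prop :=
  IsPM L R π ∧ π.Pairwise (fun p q => p.1 < q.1)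

/-- An m×n Cauchon diagram: `W i j = true` means the square (i,j) is white.
If a square is black then all squares strictly to its left are black
or all squares strictly above it are black. -/
def IsCauchon {m n : ℕ} (W : Fin m → Fin n → Bool) : Prop :=
  ∀ i j, W i j = false →
    (∀ j' : Fin n, j' < j → W i j' = false) ∨ (∀ i' : Fin m, i' < i → W i' j = false)

/-- The label of a square: 1 plus the number of white squares preceding it in
reading order (left to right along rows, top row first). -/
def cdLabel {m n : ℕ} (W : Fin m → Fin n → Bool) (p : Fin m × Fin n) : ℕ :=
  1 + (Finset.univ.filter (fun q : Fin m × Fin n =>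
      W q.1 q.2 = true ∧ (q.1 < p.1 ∨ (q.1 = p.1 ∧ q.2 < p.2)))).card

/-- The set of labels of the white squares. -/
def whiteLabels {m n : ℕ} (W : Fin m → Fin n → Bool) : Finset ℕ :=
  (Finset.univ.filter (fun p : Fin m × Fin n => W p.1 p.2 = true)).image (cdLabel W)

/-- Two labels are joinable iff their white squares lie in a common row or column. -/
def sameLine {m n : ℕ} (W : Fin m → Fin n → Bool) (a b : ℕ) : Prop :=
  ∃ p q : Fin m × Fin n, W p.1 p.2 = true ∧ W q.1 q.2 = true ∧
    cdLabel W p = a ∧ cdLabel W q = b ∧ (p.1 = q.1 ∨ p.2 = q.2)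

/-- The Pfaffian of a (labeled) Cauchon diagram: the sum of signs over all
perfect matchings (in canonical form). -/
noncomputable def cdPf {m n : ℕ} (W : Fin m → Fin n → Bool) : ℤ :=
  ∑ᶠ π ∈ {π : List (ℕ × ℕ) | IsPMsorted (whiteLabels W) (sameLine W) π}, sgnList π

/-- `p(C)`: the largest (1-based) column index whose second-row square is black. -/
def pCol {n : ℕ} (W : Fin 2 → Fin n → Bool) : ℕ :=
  (Finset.univ.filter (fun j : Fin n => W 1 j = false)).sup (fun j => (j : ℕ) + 1)

/-- `Vert(C)`: columns strictly to the right of `p(C)` whose top square is white. -/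
def vertC {n : ℕ} (W : Fin 2 → Fin n → Bool) : Finset (Fin n) :=
  Finset.univ.filter (fun j => pCol W < (j : ℕ) + 1 ∧ W 0 j = true)

/-- `sum_C(T)`: the sum of the labels of the white squares in the columns in `T`. -/
def sumC {n : ℕ} (W : Fin 2 → Fin n → Bool) (T : Finset (Fin n)) : ℕ :=
  ∑ j ∈ T, ((if W 0 j = true then cdLabel W (0, j) else 0) +
             (if W 1 j = true then cdLabel W (1, j) else 0))

section CauchonCount

open Finset

variable {n : ℕ}

/-- Simplified condition for a 2×n Cauchon diagram with no all-black column. -/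
def cdCond {n : ℕ} (W : Fin 2 → Fin n → Bool) : Prop :=
  (∀ j j' : Fin n, j' < j → W 1 j = false → W 1 j' = false) ∧
  (∀ j, W 1 j = false → W 0 j = true)

lemma cdCond_iff (W : Fin 2 → Fin n → Bool) :
    (IsCauchon W ∧ ∀ j : Fin n, ∃ i : Fin 2, W i j = true) ↔ cdCond W := by
  constructor
  · rintro ⟨hC, hc⟩
    constructor
    · intro j j' hlt hj
      rcases hC 1 j hj with h | h
      · exact h j' hlt
      · exfalso
        have h0 : W 0 j = false := h 0 (by decide)
        rcases hc j with ⟨i, hi⟩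
        fin_cases i <;> simp_all
    · intro j hj
      rcases hc j with ⟨i, hi⟩
      fin_cases i
      · exact hi
      · simp_all
  · rintro ⟨h1, h2⟩
    constructor
    · intro i j hij
      fin_cases i
      · right
        intro i' hi'
        have : (i' : ℕ) < 0 := hi'
        omega
      · left
        intro j' hj'
        exact h1 j j' hj' hij
    · intro j
      by_cases h : W 1 j = true
      · exact ⟨1, h⟩
      · exact ⟨0, h2 j (by simpa using h)⟩

lemma mem_iff_lt_card (W : Fin 2 → Fin n → Bool)
    (h1 : ∀ j j' : Fin n, j' < j → W 1 j = false → W 1 j' = false) (j : Fin n) :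
    W 1 j = false ↔ (j : ℕ) < ((univ : Finset (Fin n)).filter (fun k => W 1 k = false)).card := by
  set s := (univ : Finset (Fin n)).filter (fun k => W 1 k = false) with hs
  constructor
  · intro hj
    have hsub : Finset.Iic j ⊆ s := by
      intro k hk
      rw [Finset.mem_Iic] at hk
      rw [hs, Finset.mem_filter]
      rcases eq_or_lt_of_le hk with h | h
      · exact ⟨Finset.mem_univ _, h ▸ hj⟩
      · exact ⟨Finset.mem_univ _, h1 j k h hj⟩
    have := Finset.card_le_card hsub
    rw [Fin.card_Iic] at this
    omega
  · intro hj
    by_contra h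
    have hwt : W 1 j = true := by
      cases hW : W 1 j
      · exact absurd hW h
      · rfl
    have hsub : s ⊆ Finset.Iio j := by
      intro k hk
      rw [hs, Finset.mem_filter] at hk
      rw [Finset.mem_Iio]
      by_contra hk'
      rcases eq_or_lt_of_le (le_of_not_gt hk') with h' | h'
      · rw [h'] at hwt; simp [hwt] at hk
      · have := h1 k j h' hk.2
        simp [hwt] at this
    have := Finset.card_le_card hsub
    rw [Fin.card_Iio] at this
    omega

lemma card_filter_lt_val (p : ℕ) (hp : p ≤ n) :
    ((univ : Finset (Fin n)).filter (fun j : Fin n => (j : ℕ) < p)).card = p := by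
  have h : ∀ m ∈ Finset.range p, m < n := fun m hm =>
    lt_of_lt_of_le (Finset.mem_range.mp hm) hp
  have heq : ((univ : Finset (Fin n)).filter (fun j : Fin n => (j : ℕ) < p)) =
      (Finset.range p).attachFin h := by
    ext j
    simp [Finset.mem_attachFin]
  rw [heq, Finset.card_attachFin, Finset.card_range]

lemma card_subtype_ge (p : ℕ) (hp : p ≤ n) :
    Fintype.card {j : Fin n // p ≤ (j : ℕ)} = n - p := by
  classical
  rw [Fintype.card_subtype]
  have hadd := Finset.card_filter_add_card_filter_not
    (s := (univ : Finset (Fin n))) (p := fun j : Fin n => (j : ℕ) < p)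
  rw [card_filter_lt_val p hp, Finset.card_univ, Fintype.card_fin] at hadd
  have heq : (univ : Finset (Fin n)).filter (fun j : Fin n => p ≤ (j : ℕ)) =
      (univ : Finset (Fin n)).filter (fun j : Fin n => ¬ (j : ℕ) < p) := by
    simp [not_lt]
  rw [heq]
  omega

lemma mySigmaExt {a b : Fin (n + 1)}
    (f : {j : Fin n // (a : ℕ) ≤ (j : ℕ)} → Bool)
    (g : {j : Fin n // (b : ℕ) ≤ (j : ℕ)} → Bool)
    (h : a = b)
    (hfg : ∀ (j : Fin n) (hja : (a : ℕ) ≤ (j : ℕ)) (hjb : (b : ℕ) ≤ (j : ℕ)),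
      f ⟨j, hja⟩ = g ⟨j, hjb⟩) :
    (⟨a, f⟩ : Σ p : Fin (n + 1), ({j : Fin n // (p : ℕ) ≤ (j : ℕ)} → Bool)) = ⟨b, g⟩ := by
  subst h
  exact congrArg (Sigma.mk a) (funext fun j => hfg j.1 j.2 j.2)

/-- The key bijection. -/
def cdEquiv (n : ℕ) : {W : Fin 2 → Fin n → Bool // cdCond W} ≃
    Σ p : Fin (n + 1), ({j : Fin n // (p : ℕ) ≤ (j : ℕ)} → Bool) where
  toFun := fun ⟨W, _⟩ =>
    ⟨⟨((univ : Finset (Fin n)).filter (fun k => W 1 k = false)).card,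
      Nat.lt_succ_of_le (le_trans (Finset.card_filter_le _ _) (by simp))⟩,
     fun j => W 0 j.1⟩
  invFun := fun ⟨p, g⟩ =>
    ⟨![fun j => if h : (p : ℕ) ≤ (j : ℕ) then g ⟨j, h⟩ else true,
       fun j => decide ((p : ℕ) ≤ (j : ℕ))], by
      constructor
      · intro j j' hlt hj
        simp only [Matrix.cons_val_one, Matrix.head_cons, Matrix.cons_val_zero, decide_eq_false_iff_not,
          not_le] at hj ⊢
        exact lt_trans hlt hj
      · intro j hj
        simp only [Matrix.cons_val_one, Matrix.head_cons, Matrix.cons_val_zero, decide_eq_false_iff_not,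
          not_le] at hj
        simp only [Matrix.cons_val_zero]
        rw [dif_neg (not_le.mpr hj)]⟩
  left_inv := by
    rintro ⟨W, hW⟩
    apply Subtype.ext
    funext i j
    have hi : i = 0 ∨ i = 1 := by omega
    rcases hi with rfl | rfl
    · simp only [Matrix.cons_val_zero]
      by_cases h : ((univ : Finset (Fin n)).filter (fun k => W 1 k = false)).card ≤ (j : ℕ)
      · rw [dif_pos h]
      · rw [dif_neg h]
        exact (hW.2 j ((mem_iff_lt_card W hW.1 j).mpr (not_le.mp h))).symm
    · simp only [Matrix.cons_val_one, Matrix.head_cons, Matrix.cons_val_zero]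
      have hiff := mem_iff_lt_card W hW.1 j
      cases hWj : W 1 j
      · have hlt : (j : ℕ) <
            ((univ : Finset (Fin n)).filter (fun k => W 1 k = false)).card := hiff.mp hWj
        simp [not_le.mpr hlt]
      · simp only [decide_eq_true_eq]
        by_contra h
        have hfalse : W 1 j = false := hiff.mpr (not_le.mp h)
        rw [hWj] at hfalse
        exact Bool.true_eq_false.mp hfalse
  right_inv := by
    rintro ⟨p, g⟩
    have hcard : ((univ : Finset (Fin n)).filter
        (fun k => (![fun j : Fin n => if h : (p : ℕ) ≤ (j : ℕ) then g ⟨j, h⟩ else true,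
          fun j : Fin n => decide ((p : ℕ) ≤ (j : ℕ))] : Fin 2 → Fin n → Bool) 1 k
          = false)).card = (p : ℕ) := by
      have heq : ((univ : Finset (Fin n)).filter
          (fun k => (![fun j : Fin n => if h : (p : ℕ) ≤ (j : ℕ) then g ⟨j, h⟩ else true,
            fun j : Fin n => decide ((p : ℕ) ≤ (j : ℕ))] : Fin 2 → Fin n → Bool) 1 k
            = false)) =
          ((univ : Finset (Fin n)).filter (fun k : Fin n => (k : ℕ) < (p : ℕ))) := by
        ext k
        simp [not_le]
      rw [heq, card_filter_lt_val (p : ℕ) (by omega)]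
    refine mySigmaExt _ _ (Fin.ext hcard) ?_
    intro j hja hjb
    simp only [Matrix.cons_val_zero]
    rw [dif_pos hjb]

lemma sum_two_pow (m : ℕ) : ∑ k ∈ Finset.range m, 2 ^ k = 2 ^ m - 1 := by
  induction m with
  | zero => simp
  | succ m ih =>
    rw [Finset.sum_range_succ, ih, pow_succ]
    have : 1 ≤ 2 ^ m := Nat.one_le_two_pow
    omega

end CauchonCount

/-- The number of 2×n Cauchon diagrams with no entirely black column is 2^(n+1) - 1. -/
theorem stmt1 (n : ℕ) :
    Nat.card {W : Fin 2 → Fin n → Bool //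
        IsCauchon W ∧ ∀ j : Fin n, ∃ i : Fin 2, W i j = true} = 2 ^ (n + 1) - 1 := by
  classical
  have e1 : {W : Fin 2 → Fin n → Bool //
      IsCauchon W ∧ ∀ j : Fin n, ∃ i : Fin 2, W i j = true} ≃
      {W : Fin 2 → Fin n → Bool // cdCond W} :=
    Equiv.subtypeEquivRight (fun W => cdCond_iff W)
  rw [Nat.card_congr (e1.trans (cdEquiv n)), Nat.card_eq_fintype_card, Fintype.card_sigma]
  have hcard : ∀ p : Fin (n + 1),
      Fintype.card ({j : Fin n // (p : ℕ) ≤ (j : ℕ)} → Bool) = 2 ^ (n - (p : ℕ)) := by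
    intro p
    rw [Fintype.card_fun, card_subtype_ge (p : ℕ) (by omega), Fintype.card_bool]
  simp only [hcard]
  rw [Fin.sum_univ_eq_sum_range (fun k => 2 ^ (n - k)) (n + 1)]
  have hrefl := Finset.sum_range_reflect (fun k => 2 ^ k) (n + 1)
  simp only [Nat.add_sub_cancel] at hrefl
  calc ∑ k ∈ Finset.range (n + 1), 2 ^ (n - k)
      = ∑ k ∈ Finset.range (n + 1), 2 ^ k := hrefl
    _ = 2 ^ (n + 1) - 1 := sum_two_pow (n + 1)
end

section
/- For all positive integers m and n, the number of m×n Cauchon diagrams satisfies |C_{m,n}| = Σ_{i=0}^{n} binomial(n, i) · |C'_{m, n−i}|, where |C_{m,0}| = |C'_{m,0}| = 1. -/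
section CauchonAux

variable {m n : ℕ}

/-- Columns of `W` that are entirely black. -/
def blackCols (W : Fin m → Fin n → Bool) : Finset (Fin n) :=
  Finset.univ.filter (fun j => ∀ i, W i j = false)

theorem mem_blackCols {W : Fin m → Fin n → Bool} {j : Fin n} :
    j ∈ blackCols W ↔ ∀ i, W i j = false := by
  simp [blackCols]

/-- The order isomorphism between `Fin (n - S.card)` and the complement of `S`. -/
def colIso (S : Finset (Fin n)) : Fin (n - S.card) ≃o {x : Fin n // x ∈ Sᶜ} :=
  Sᶜ.orderIsoOfFin (by simp [Finset.card_compl])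

def restrictW (S : Finset (Fin n)) (W : Fin m → Fin n → Bool) :
    Fin m → Fin (n - S.card) → Bool :=
  fun i j => W i ((colIso S j : {x : Fin n // x ∈ Sᶜ}) : Fin n)

def insertW (S : Finset (Fin n)) (W' : Fin m → Fin (n - S.card) → Bool) :
    Fin m → Fin n → Bool :=
  fun i j => if h : j ∈ Sᶜ then W' i ((colIso S).symm ⟨j, h⟩) else false

theorem restrict_cauchon (S : Finset (Fin n)) {W : Fin m → Fin n → Bool}
    (hW : IsCauchon W) : IsCauchon (restrictW S W) := by
  intro i j h
  rcases hW i _ h with h1 | h2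
  · exact Or.inl fun j' hj' => h1 _ (Subtype.coe_lt_coe.mpr ((colIso S).strictMono hj'))
  · exact Or.inr fun i' hi' => h2 i' hi'

theorem restrict_nocol {S : Finset (Fin n)} {W : Fin m → Fin n → Bool}
    (hS : blackCols W = S) : ∀ j, ∃ i, restrictW S W i j = true := by
  intro j
  have hmem : ((colIso S j : {x : Fin n // x ∈ Sᶜ}) : Fin n) ∉ blackCols W := by
    rw [hS]
    exact Finset.mem_compl.mp (colIso S j).2
  rw [mem_blackCols] at hmem
  push_neg at hmem
  obtain ⟨i, hi⟩ := hmem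
  exact ⟨i, by simpa [restrictW] using hi⟩

theorem insert_cauchon (S : Finset (Fin n)) {W' : Fin m → Fin (n - S.card) → Bool}
    (hW' : IsCauchon W') : IsCauchon (insertW S W') := by
  intro i j h
  by_cases hj : j ∈ Sᶜ
  · have h' : W' i ((colIso S).symm ⟨j, hj⟩) = false := by
      simpa [insertW, hj] using h
    rcases hW' i _ h' with h1 | h2
    · left
      intro j' hj'
      by_cases hj'' : j' ∈ Sᶜ
      · have hlt : (⟨j', hj''⟩ : {x : Fin n // x ∈ Sᶜ}) < ⟨j, hj⟩ := hj'
        simpa [insertW, hj''] using h1 _ ((colIso S).symm.strictMono hlt)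
      · simp [insertW, hj'']
    · right
      intro i' hi'
      simpa [insertW, hj] using h2 i' hi'
  · right
    intro i' _
    simp [insertW, hj]

theorem blackCols_insert (S : Finset (Fin n)) {W' : Fin m → Fin (n - S.card) → Bool}
    (hW' : ∀ j, ∃ i, W' i j = true) : blackCols (insertW S W') = S := by
  ext j
  rw [mem_blackCols]
  constructor
  · intro h
    by_contra hj
    have hj' : j ∈ Sᶜ := Finset.mem_compl.mpr hj
    obtain ⟨i, hi⟩ := hW' ((colIso S).symm ⟨j, hj'⟩)
    have := h i
    rw [insertW, dif_pos hj', hi] at this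
    exact Bool.true_eq_false ▸ (by simp at this)
  · intro hj i
    have : j ∉ Sᶜ := by simp [hj]
    simp [insertW, this]

theorem insert_restrict {S : Finset (Fin n)} {W : Fin m → Fin n → Bool}
    (hS : blackCols W = S) : insertW S (restrictW S W) = W := by
  funext i j
  by_cases hj : j ∈ Sᶜ
  · simp only [insertW, restrictW, dif_pos hj]
    congr 1
    exact congrArg _ ((colIso S).apply_symm_apply ⟨j, hj⟩)
  · have hjS : j ∈ blackCols W := by
      rw [hS]; simpa using hj
    rw [mem_blackCols] at hjS
    simp [insertW, hj, (hjS i).symm]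

theorem restrict_insert (S : Finset (Fin n)) (W' : Fin m → Fin (n - S.card) → Bool) :
    restrictW S (insertW S W') = W' := by
  funext i j
  have h : ((colIso S j : {x : Fin n // x ∈ Sᶜ}) : Fin n) ∈ Sᶜ := (colIso S j).2
  simp only [restrictW, insertW, dif_pos h]
  congr 1
  rw [show (⟨_, h⟩ : {x : Fin n // x ∈ Sᶜ}) = colIso S j from Subtype.ext rfl,
    (colIso S).symm_apply_apply]

def fiberEquiv (S : Finset (Fin n)) :
    {W : Fin m → Fin n → Bool // IsCauchon W ∧ blackCols W = S} ≃
      {W' : Fin m → Fin (n - S.card) → Bool //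
        IsCauchon W' ∧ ∀ j, ∃ i', W' i' j = true} where
  toFun := fun w => ⟨restrictW S w.1, restrict_cauchon S w.2.1, restrict_nocol w.2.2⟩
  invFun := fun w => ⟨insertW S w.1, insert_cauchon S w.2.1, blackCols_insert S w.2.2⟩
  left_inv := fun w => Subtype.ext (insert_restrict w.2.2)
  right_inv := fun w => Subtype.ext (restrict_insert S w.1)

def sigmaEquiv :
    {W : Fin m → Fin n → Bool // IsCauchon W} ≃
      Σ S : Finset (Fin n), {W : Fin m → Fin n → Bool // IsCauchon W ∧ blackCols W = S} where
  toFun := fun w => ⟨blackCols w.1, w.1, w.2, rfl⟩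
  invFun := fun p => ⟨p.2.1, p.2.2.1⟩
  left_inv := fun w => rfl
  right_inv := fun p => by
    obtain ⟨S, W, hW, hS⟩ := p
    cases hS
    rfl

end CauchonAux

/-- |C_{m,n}| = Σ_{i=0}^n  C(n,i) |C'_{m,n-i}|. -/
theorem stmt2 (m n : ℕ) (hm : 0 < m) (hn : 0 < n) :
    Nat.card {W : Fin m → Fin n → Bool // IsCauchon W} =
      ∑ i ∈ Finset.range (n + 1), Nat.choose n i *
        Nat.card {W : Fin m → Fin (n - i) → Bool //
          IsCauchon W ∧ ∀ j : Fin (n - i), ∃ i' : Fin m, W i' j = true} := by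
  classical
  set g : ℕ → ℕ := fun i => Nat.card {W : Fin m → Fin (n - i) → Bool //
      IsCauchon W ∧ ∀ j : Fin (n - i), ∃ i' : Fin m, W i' j = true} with hg
  have h1 : Nat.card {W : Fin m → Fin n → Bool // IsCauchon W}
      = ∑ S : Finset (Fin n), g S.card := by
    rw [Nat.card_congr (sigmaEquiv (m := m) (n := n))]
    rw [Nat.card_eq_fintype_card, Fintype.card_sigma]
    refine Finset.sum_congr rfl fun S _ => ?_
    rw [← Nat.card_eq_fintype_card, Nat.card_congr (fiberEquiv S)]
  rw [h1, ← Finset.powerset_univ, Finset.sum_powerset]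
  rw [Finset.card_univ, Fintype.card_fin]
  refine Finset.sum_congr rfl fun i _ => ?_
  rw [Finset.sum_congr rfl (fun S hS => by
    rw [(Finset.mem_powersetCard.mp hS).2]), Finset.sum_const,
    Finset.card_powersetCard, Finset.card_univ, Fintype.card_fin, smul_eq_mul]
end

section
/- For every positive integer n, Σ_{m=1}^{n} binomial(n,m)·(2^m − 1)·χ(m odd) + Σ_{m=1}^{n} binomial(n,m)·2^{m−1}·χ(m even) + 1 = (3^{n+1} − 2^{n+1} + (−1)^{n+1} + 2)/4. -/
lemma binom_sum (n : ℕ) (x : ℚ) :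
    ∑ m ∈ Finset.range (n + 1), (n.choose m : ℚ) * x ^ m = (x + 1) ^ n := by
  rw [add_pow]
  refine Finset.sum_congr rfl fun m _ => ?_
  ring

/-- The final combinatorial identity counting primitive H-primes in O_q(M_{2,n}). -/
theorem stmt3 (n : ℕ) (hn : 0 < n) :
    (∑ m ∈ Finset.Icc 1 n, (n.choose m : ℚ) * (2 ^ m - 1) * (if Odd m then 1 else 0)) +
      (∑ m ∈ Finset.Icc 1 n, (n.choose m : ℚ) * 2 ^ (m - 1) * (if Even m then 1 else 0)) + 1 =
      (3 ^ (n + 1) - 2 ^ (n + 1) + (-1) ^ (n + 1) + 2) / 4 := by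
  set f : ℕ → ℚ := fun m =>
    (n.choose m : ℚ) * ((3/4) * 2 ^ m - (1/4) * (-2 : ℚ) ^ m - 1/2 + (1/2) * (-1 : ℚ) ^ m)
    with hf
  have key : (∑ m ∈ Finset.Icc 1 n, (n.choose m : ℚ) * (2 ^ m - 1) * (if Odd m then 1 else 0)) +
      (∑ m ∈ Finset.Icc 1 n, (n.choose m : ℚ) * 2 ^ (m - 1) * (if Even m then 1 else 0)) =
      ∑ m ∈ Finset.Icc 1 n, f m := by
    rw [← Finset.sum_add_distrib]
    refine Finset.sum_congr rfl fun m hm => ?_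
    have hm1 : 1 ≤ m := (Finset.mem_Icc.mp hm).1
    rcases Nat.even_or_odd m with he | ho
    · have h1 : ¬ Odd m := Nat.not_odd_iff_even.mpr he
      have h2 : (-2 : ℚ) ^ m = 2 ^ m := he.neg_pow 2
      have h3 : (-1 : ℚ) ^ m = 1 := he.neg_one_pow
      have h4 : (2 : ℚ) ^ m = 2 ^ (m - 1) * 2 := by
        rw [← pow_succ]; congr 1; omega
      simp only [hf, if_pos he, if_neg h1, h2, h3, h4]
      ring
    · have h1 : ¬ Even m := Nat.not_even_iff_odd.mpr ho
      have h2 : (-2 : ℚ) ^ m = -(2 ^ m) := ho.neg_pow 2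
      have h3 : (-1 : ℚ) ^ m = -1 := ho.neg_one_pow
      simp only [hf, if_pos ho, if_neg h1, h2, h3]
      ring
  rw [key]
  have split : ∑ m ∈ Finset.range (n + 1), f m = f 0 + ∑ m ∈ Finset.Icc 1 n, f m := by
    rw [Finset.range_eq_Ico, Finset.sum_eq_sum_Ico_succ_bot (by omega), Finset.Ico_add_one_right_eq_Icc]
  have hIcc : ∑ m ∈ Finset.Icc 1 n, f m = ∑ m ∈ Finset.range (n + 1), f m - f 0 := by
    rw [split]; ring
  have expand : ∑ m ∈ Finset.range (n + 1), f m =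
      (3/4) * (∑ m ∈ Finset.range (n + 1), (n.choose m : ℚ) * 2 ^ m)
      - (1/4) * (∑ m ∈ Finset.range (n + 1), (n.choose m : ℚ) * (-2 : ℚ) ^ m)
      - (1/2) * (∑ m ∈ Finset.range (n + 1), (n.choose m : ℚ))
      + (1/2) * (∑ m ∈ Finset.range (n + 1), (n.choose m : ℚ) * (-1 : ℚ) ^ m) := by
    rw [Finset.mul_sum, Finset.mul_sum, Finset.mul_sum, Finset.mul_sum,
      ← Finset.sum_sub_distrib, ← Finset.sum_sub_distrib, ← Finset.sum_add_distrib]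
    refine Finset.sum_congr rfl fun m _ => ?_
    simp only [hf]
    ring
  have s1 := binom_sum n 2
  have s2 := binom_sum n (-2)
  have s3 := binom_sum n 1
  have s4 := binom_sum n (-1)
  norm_num at s1 s2 s3 s4
  rw [zero_pow (by omega : n ≠ 0)] at s4
  rw [hIcc, expand, s1, s2, s3, s4]
  have h0 : f 0 = 1/2 := by norm_num [hf]
  rw [h0]
  have hneg : (-1 : ℚ) ^ (n + 1) = -(-1 : ℚ) ^ n := by rw [pow_succ]; ring
  rw [hneg]
  ring
end

section
/- The ratio of (3^{n+1} − 2^{n+1} + (−1)^{n+1} + 2)/4 to 2·3^n − 2^n tends to 3/8 as n → ∞. -/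
/-- The proportion of primitive H-primes in O_q(M_{2,n}) tends to 3/8. -/
theorem stmt14 :
    Filter.Tendsto (fun n : ℕ =>
      ((3 ^ (n + 1) - 2 ^ (n + 1) + (-1 : ℝ) ^ (n + 1) + 2) / 4) /
        (2 * 3 ^ n - 2 ^ n)) Filter.atTop (nhds (3 / 8)) := by
  have ha : Filter.Tendsto (fun n : ℕ => ((2 : ℝ) / 3) ^ n) Filter.atTop (nhds 0) := by
    apply tendsto_pow_atTop_nhds_zero_of_norm_lt_one
    rw [Real.norm_eq_abs, abs_lt]; norm_num
  have hb : Filter.Tendsto (fun n : ℕ => ((-1 : ℝ) / 3) ^ n) Filter.atTop (nhds 0) := by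
    apply tendsto_pow_atTop_nhds_zero_of_norm_lt_one
    rw [Real.norm_eq_abs, abs_lt]; norm_num
  have hc : Filter.Tendsto (fun n : ℕ => ((1 : ℝ) / 3) ^ n) Filter.atTop (nhds 0) := by
    apply tendsto_pow_atTop_nhds_zero_of_norm_lt_one
    rw [Real.norm_eq_abs, abs_lt]; norm_num
  have hg : Filter.Tendsto (fun n : ℕ =>
      (3 - 2 * ((2 : ℝ) / 3) ^ n - ((-1 : ℝ) / 3) ^ n + 2 * ((1 : ℝ) / 3) ^ n) /
        (4 * (2 - ((2 : ℝ) / 3) ^ n))) Filter.atTop (nhds (3 / 8)) := by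
    have hnum : Filter.Tendsto (fun n : ℕ =>
        (3 - 2 * ((2 : ℝ) / 3) ^ n - ((-1 : ℝ) / 3) ^ n + 2 * ((1 : ℝ) / 3) ^ n))
        Filter.atTop (nhds 3) := by
      have := ((((tendsto_const_nhds (x := (3:ℝ))).sub (ha.const_mul 2)).sub hb).add (hc.const_mul 2))
      simpa using this
    have hden : Filter.Tendsto (fun n : ℕ => (4 * (2 - ((2 : ℝ) / 3) ^ n)))
        Filter.atTop (nhds 8) := by
      have := ((tendsto_const_nhds (x := (2:ℝ))).sub ha).const_mul (4 : ℝ)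
      norm_num at this; exact this
    have := hnum.div hden (by norm_num)
    exact this
  apply hg.congr
  intro n
  have h3 : (3 : ℝ) ^ n ≠ 0 := by positivity
  have h2 : (2 : ℝ) * 3 ^ n - 2 ^ n ≠ 0 := by
    have : (2 : ℝ) ^ n ≤ 3 ^ n := pow_le_pow_left₀ (by norm_num) (by norm_num) n
    nlinarith [pow_pos (show (0:ℝ) < 3 by norm_num) n]
  have hden2 : (4 : ℝ) * (2 - ((2 : ℝ) / 3) ^ n) ≠ 0 := by
    have : ((2 : ℝ) / 3) ^ n ≤ 1 := pow_le_one₀ (by norm_num) (by norm_num)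
    nlinarith
  simp only [div_pow, one_pow]
  field_simp
  ring
end
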